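/- Let L be an effect algebra with the strong Riesz Decomposition Property admitting a natural basis (b_n), and let X be a finite-dimensional Banach space. Then every σ-additive measure μ : L → X is bounded: sup_{a∈L} ‖μ(a)‖ < ∞. -/

import Mathlib

open Filter Topology
open scoped ENNReal NNReal

/-- An effect algebra: a partial commutative monoid with orthosupplementation
and the zero-one law. `D a b` means `a ⊕ b` is defined; `add` is the (junk-valued
outside `D`) total extension of `⊕`. -/
structure EffectAlgebra (L : Type*) where
  D : L → L → Prop
  add : L → L → L
  zero : L
  one : L
  comm_def : ∀ {a b}, D a b → D b a
  comm : ∀ {a b}, D a b → add a b = add b a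
  assoc_def₁ : ∀ {a b c}, D b c → D a (add b c) → D a b
  assoc_def₂ : ∀ {a b c}, D b c → D a (add b c) → D (add a b) c
  assoc : ∀ {a b c}, D b c → D a (add b c) → add (add a b) c = add a (add b c)
  orth : ∀ a, ∃! a', D a a' ∧ add a a' = one
  zero_one : ∀ {a}, D one a → a = zero

namespace EffectAlgebra

variable {L : Type*}

/-- The canonical order: `a ≤ b` iff `a ⊕ r = b` for some `r`. -/
def le (E : EffectAlgebra L) (a b : L) : Prop := ∃ r, E.D a r ∧ E.add a r = b

/-- The orthosupplement `1 ⊖ a`. -/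
noncomputable def compl (E : EffectAlgebra L) (a : L) : L := (E.orth a).choose

/-- Partial sums `a 0 ⊕ ⋯ ⊕ a n`. -/
def psum (E : EffectAlgebra L) (a : ℕ → L) : ℕ → L
  | 0 => a 0
  | n + 1 => E.add (E.psum a n) (a (n + 1))

/-- A sequence is orthogonal when all its finite orthosums are defined. -/
def Orthogonal (E : EffectAlgebra L) (a : ℕ → L) : Prop :=
  ∀ n, E.D (E.psum a n) (a (n + 1))

/-- `s` is the supremum of the set `S` in the canonical order. -/
def IsSup (E : EffectAlgebra L) (S : Set L) (s : L) : Prop :=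
  (∀ x ∈ S, E.le x s) ∧ ∀ u, (∀ x ∈ S, E.le x u) → E.le s u

/-- `s = ⊕ₙ a n`: the sequence is orthogonal and `s` is the sup of the finite orthosums. -/
def IsOrthoSum (E : EffectAlgebra L) (a : ℕ → L) (s : L) : Prop :=
  E.Orthogonal a ∧ E.IsSup (Set.range (E.psum a)) s

/-- Additive (finitely additive) measure. -/
def IsMeasure {G : Type*} [AddCommMonoid G] (E : EffectAlgebra L) (μ : L → G) : Prop :=
  ∀ a b, E.D a b → μ (E.add a b) = μ a + μ b

/-- σ-additivity: `μ (⊕ₙ a n) = Σₙ μ (a n)` whenever the orthosum exists. -/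
def SigmaAdditive {G : Type*} [AddCommMonoid G] [TopologicalSpace G]
    (E : EffectAlgebra L) (μ : L → G) : Prop :=
  ∀ a s, E.IsOrthoSum a s →
    Tendsto (fun n => ∑ k ∈ Finset.range n, μ (a k)) atTop (𝓝 (μ s))

/-- Exhaustivity: `μ (a n) → 0` along every orthogonal sequence. -/
def Exhaustive {G : Type*} [AddCommMonoid G] [TopologicalSpace G]
    (E : EffectAlgebra L) (μ : L → G) : Prop :=
  ∀ a, E.Orthogonal a → Tendsto (fun n => μ (a n)) atTop (𝓝 0)

/-- A generator: every element is the sup of an increasing sequence from `B`. -/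
def IsGenerator (E : EffectAlgebra L) (B : Set L) : Prop :=
  ∀ a : L, ∃ b : ℕ → L, (∀ n, b n ∈ B) ∧ (∀ n, E.le (b n) (b (n + 1)))
    ∧ E.IsSup (Set.range b) a

/-- Riesz decomposition property. -/
def RDP (E : EffectAlgebra L) : Prop :=
  ∀ a b c, E.D a b → E.le c (E.add a b) →
    ∃ c₁ c₂, E.D c₁ c₂ ∧ E.add c₁ c₂ = c ∧ E.le c₁ a ∧ E.le c₂ b

/-- Strong Riesz decomposition property. -/
def sRDP (E : EffectAlgebra L) : Prop :=
  ∀ (a : ℕ → L) (s c : L), E.IsOrthoSum a s → E.le c s →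
    ∃ c' : ℕ → L, E.IsOrthoSum c' c ∧ ∀ n, E.le (c' n) (a n)

/-- A natural basis: an orthogonal sequence of minimal nonzero elements with orthosum `1`. -/
def IsNaturalBasis (E : EffectAlgebra L) (b : ℕ → L) : Prop :=
  E.IsOrthoSum b E.one ∧
  ∀ n, b n ≠ E.zero ∧ ∀ c, c ≠ E.zero → E.le c (b n) → c = b n

/-- The set of finite orthosums of elements of the sequence `b`. -/
def finOrthosums (E : EffectAlgebra L) (b : ℕ → L) : Set L :=
  { x | ∃ c : ℕ → L, (∀ n, c n = b n ∨ c n = E.zero) ∧ E.Orthogonal c ∧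
        ∃ N, x = E.psum c N }

/-- A sequence of measures is pointwise convergent. -/
def PtwiseConv (μ : ℕ → L → ℝ) : Prop :=
  ∀ a : L, ∃ x : ℝ, Tendsto (fun i => μ i a) atTop (𝓝 x)

/-- Uniform exhaustivity of a sequence of measures. -/
def UnifExhaustive (E : EffectAlgebra L) (μ : ℕ → L → ℝ) : Prop :=
  ∀ a, E.Orthogonal a →
    TendstoUniformly (fun n (i : ℕ) => μ i (a n)) (fun _ => (0 : ℝ)) atTop

/-- Uniform strong additivity of a sequence of measures. -/
def UnifStronglyAdditive (E : EffectAlgebra L) (μ : ℕ → L → ℝ) : Prop :=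
  ∀ a, E.Orthogonal a → ∃ f : ℕ → ℝ,
    TendstoUniformly (fun n (i : ℕ) => ∑ k ∈ Finset.range n, μ i (a k)) f atTop

/-- The Nikodym property. -/
def Nikodym (E : EffectAlgebra L) : Prop :=
  ∀ μ : ℕ → L → ℝ, (∀ i, E.IsMeasure (μ i)) → (∀ i, ∃ M, ∀ a, |μ i a| ≤ M) →
    (∀ a : L, ∃ M, ∀ i, |μ i a| ≤ M) → ∃ M, ∀ i, ∀ a : L, |μ i a| ≤ M

/-- The Grothendieck property. -/
def Grothendieck (E : EffectAlgebra L) : Prop :=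
  ∀ μ : ℕ → L → ℝ, (∀ i, E.IsMeasure (μ i)) → (∀ i, ∃ M, ∀ a, |μ i a| ≤ M) →
    PtwiseConv μ → (∃ M, ∀ i, ∀ a : L, |μ i a| ≤ M) → E.UnifStronglyAdditive μ

/-- The Vitali-Hahn-Saks property. -/
def VHS (E : EffectAlgebra L) : Prop :=
  ∀ μ : ℕ → L → ℝ, (∀ i, E.IsMeasure (μ i)) → (∀ i, ∃ M, ∀ a, |μ i a| ≤ M) →
    PtwiseConv μ → E.UnifExhaustive μ

/-- The σ-Nikodym property. -/
def SigmaNikodym (E : EffectAlgebra L) : Prop :=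
  ∀ μ : ℕ → L → ℝ, (∀ i, E.IsMeasure (μ i)) → (∀ i, E.SigmaAdditive (μ i)) →
    (∀ i, ∃ M, ∀ a, |μ i a| ≤ M) →
    (∀ a : L, ∃ M, ∀ i, |μ i a| ≤ M) → ∃ M, ∀ i, ∀ a : L, |μ i a| ≤ M

/-- The σ-Vitali-Hahn-Saks property. -/
def SigmaVHS (E : EffectAlgebra L) : Prop :=
  ∀ μ : ℕ → L → ℝ, (∀ i, E.IsMeasure (μ i)) → (∀ i, E.SigmaAdditive (μ i)) →
    (∀ i, ∃ M, ∀ a, |μ i a| ≤ M) → PtwiseConv μ → E.UnifExhaustive μ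

/-- A bounding subset. -/
def Bounding (E : EffectAlgebra L) (B : Set L) : Prop :=
  ∀ (G : Type) [NormedAddCommGroup G], ∀ μ : ℕ → L → G,
    (∀ i, E.IsMeasure (μ i)) → (∀ i, E.SigmaAdditive (μ i)) →
    (∀ a : L, ∃ M, ∀ i, ‖μ i a‖ ≤ M) →
    ((∃ M, ∀ i, ∀ b ∈ B, ‖μ i b‖ ≤ M) ↔ (∃ M, ∀ i, ∀ a : L, ‖μ i a‖ ≤ M))

/-- A natural subset: a generator closed under orthosums of orthogonal pairs all of whose
orthogonal-complement slices are bounding. -/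
def NaturalSubset (E : EffectAlgebra L) (B : Set L) : Prop :=
  E.IsGenerator B ∧ (∀ b ∈ B, ∀ c ∈ B, E.D b c → E.add b c ∈ B) ∧
    ∀ b ∈ B, E.Bounding {c ∈ B | E.D c b}

/-- A natural effect algebra: one admitting a natural subset. -/
def Natural (E : EffectAlgebra L) : Prop := ∃ B, E.NaturalSubset B

/-- The orthogonally sequential property. -/
def OSP (E : EffectAlgebra L) : Prop :=
  ∀ b : ℕ → L, ∃ c : ℕ → L, E.Orthogonal c ∧ (∀ k, E.le (c k) (b k)) ∧
    ∀ (a : L) (k₀ : ℕ), E.le a (b k₀) → (∀ i, i ≠ k₀ → E.le (b i) (E.compl a)) →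
      E.le a (c k₀)

/-- The subsequential interpolation property. -/
def SIP (E : EffectAlgebra L) : Prop :=
  ∀ a : ℕ → L, E.Orthogonal a → ∀ M : Set ℕ, M.Infinite →
    ∃ (x : L) (N : Set ℕ), N ⊆ M ∧ N.Infinite ∧ (∀ n ∈ N, E.le (a n) x) ∧
      ∀ n ∉ N, E.le (a n) (E.compl x)

/-- Iterated orthosum starting from `x`: all steps defined. -/
def OrthoFrom (E : EffectAlgebra L) : L → List L → Prop
  | _, [] => True
  | x, y :: ys => E.D x y ∧ E.OrthoFrom (E.add x y) ys

/-- The orthosum `x ⊕ y₁ ⊕ ⋯ ⊕ yₙ` of a nonempty list. -/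
def psumList (E : EffectAlgebra L) : L → List L → L
  | x, [] => x
  | x, y :: ys => E.psumList (E.add x y) ys

/-- The variation of a measure: the sup over finite decompositions
`e = e₁ ⊕ ⋯ ⊕ eₙ` of `Σ ‖μ eᵢ‖`, valued in `[0,∞]`. -/
noncomputable def variation {G : Type*} [NormedAddCommGroup G]
    (E : EffectAlgebra L) (μ : L → G) (e : L) : ℝ≥0∞ :=
  sSup { v : ℝ≥0∞ | ∃ (x : L) (xs : List L), E.OrthoFrom x xs ∧ E.psumList x xs = e ∧
    v = ((x :: xs).map fun y => (‖μ y‖₊ : ℝ≥0∞)).sum }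

end EffectAlgebra
namespace EffectAlgebra

section Aux

variable {L : Type*} (E : EffectAlgebra L)

lemma one_zero : E.D E.one E.zero ∧ E.add E.one E.zero = E.one := by
  obtain ⟨e, ⟨h1, h2⟩, _⟩ := E.orth E.one
  have he : e = E.zero := E.zero_one h1
  rw [he] at h1 h2
  exact ⟨h1, h2⟩

lemma compl_spec (a : L) : E.D a (E.compl a) ∧ E.add a (E.compl a) = E.one :=
  (E.orth a).choose_spec.1

lemma le_one (a : L) : E.le a E.one :=
  ⟨E.compl a, (E.compl_spec a).1, (E.compl_spec a).2⟩

lemma add_zero' (a : L) : E.D a E.zero ∧ E.add a E.zero = a := by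
  obtain ⟨hD, hA⟩ := E.compl_spec a
  obtain ⟨h10, h10e⟩ := E.one_zero
  rw [← hA] at h10 h10e
  have h0s : E.D E.zero (E.add a (E.compl a)) := E.comm_def h10
  have h0a : E.D E.zero a := E.assoc_def₁ hD h0s
  have ha0 : E.D a E.zero := E.comm_def h0a
  have h0ab : E.D (E.add E.zero a) (E.compl a) := E.assoc_def₂ hD h0s
  have h1 : E.add (E.add E.zero a) (E.compl a) = E.one := by
    rw [E.assoc hD h0s, E.comm h0s, h10e, hA]
  obtain ⟨x, _, hu⟩ := E.orth (E.compl a)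
  have e1 : a = x := hu a ⟨E.comm_def hD, by rw [E.comm (E.comm_def hD), hA]⟩
  have e2 : E.add E.zero a = x := hu _ ⟨E.comm_def h0ab, by rw [E.comm (E.comm_def h0ab), h1]⟩
  refine ⟨ha0, ?_⟩
  rw [← E.comm h0a, e2, ← e1]

lemma zero_le (a : L) : E.le E.zero a :=
  ⟨a, E.comm_def (E.add_zero' a).1, by rw [E.comm (E.comm_def (E.add_zero' a).1), (E.add_zero' a).2]⟩

lemma le_refl' (a : L) : E.le a a := ⟨E.zero, (E.add_zero' a).1, (E.add_zero' a).2⟩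

lemma assoc' {a b c : L} (h1 : E.D a b) (h2 : E.D (E.add a b) c) :
    E.D b c ∧ E.D a (E.add b c) ∧
      E.add (E.add a b) c = E.add a (E.add b c) := by
  have hc : E.D c (E.add a b) := E.comm_def h2
  have hca : E.D c a := E.assoc_def₁ h1 hc
  have hac : E.D a c := E.comm_def hca
  have hbac : E.D b (E.add a c) := by
    have h' := E.assoc_def₂ h1 hc
    rw [E.comm hca] at h'
    exact E.comm_def h'
  have hbca : E.D b (E.add c a) := by rw [E.comm hca]; exact hbac
  have hbc : E.D b c := E.assoc_def₁ hca hbca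
  have hDbca : E.D (E.add b c) a := E.assoc_def₂ hca hbca
  have ha_bc : E.D a (E.add b c) := E.comm_def hDbca
  have e2 : E.add (E.add b a) c = E.add b (E.add a c) := E.assoc hac hbac
  have e3 : E.add (E.add b c) a = E.add b (E.add c a) := E.assoc hca hbca
  refine ⟨hbc, ha_bc, ?_⟩
  calc E.add (E.add a b) c = E.add (E.add b a) c := by rw [E.comm h1]
    _ = E.add b (E.add a c) := e2
    _ = E.add b (E.add c a) := by rw [E.comm hac]
    _ = E.add (E.add b c) a := e3.symm
    _ = E.add a (E.add b c) := E.comm hDbca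

lemma swap' {a b c : L} (h1 : E.D a b) (h2 : E.D (E.add a b) c) :
    E.D a c ∧ E.D (E.add a c) b ∧
      E.add (E.add a b) c = E.add (E.add a c) b := by
  obtain ⟨hbc, habc, he⟩ := E.assoc' h1 h2
  have hcb : E.D c b := E.comm_def hbc
  have hacb : E.D a (E.add c b) := by rw [E.comm hcb]; exact habc
  have hac : E.D a c := E.assoc_def₁ hcb hacb
  have hDacb : E.D (E.add a c) b := E.assoc_def₂ hcb hacb
  have e : E.add (E.add a c) b = E.add a (E.add c b) := E.assoc hcb hacb
  refine ⟨hac, hDacb, ?_⟩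
  rw [he, E.comm hbc, ← e]

lemma le_add_self {a b : L} (h : E.D a b) : E.le a (E.add a b) := ⟨b, h, rfl⟩

lemma le_trans' {a x y : L} (h1 : E.le a x) (h2 : E.le x y) : E.le a y := by
  obtain ⟨r, hr, hra⟩ := h1
  obtain ⟨s, hs, hsa⟩ := h2
  rw [← hra] at hs hsa
  obtain ⟨hrs, hars, he⟩ := E.assoc' hr hs
  exact ⟨E.add r s, hars, by rw [← he, hsa]⟩

lemma D_of_le_left {a x y : L} (h : E.le a x) (hD : E.D x y) : E.D a y := by
  obtain ⟨r, hr, hra⟩ := h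
  rw [← hra, E.comm hr] at hD
  exact (E.assoc' (E.comm_def hr) hD).1

lemma D_of_le_both {a c x y : L} (ha : E.le a x) (hc : E.le c y) (hD : E.D x y) : E.D a c := by
  have h1 : E.D a y := E.D_of_le_left ha hD
  have h2 : E.D c a := E.D_of_le_left hc (E.comm_def h1)
  exact E.comm_def h2

lemma psum_succ (a : ℕ → L) (n : ℕ) : E.psum a (n + 1) = E.add (E.psum a n) (a (n + 1)) := rfl

lemma psum_congr {a a' : ℕ → L} (n : ℕ) (h : ∀ k ≤ n, a k = a' k) :
    E.psum a n = E.psum a' n := by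
  induction n with
  | zero => exact h 0 le_rfl
  | succ n ih =>
    rw [E.psum_succ, E.psum_succ, ih (fun k hk => h k (hk.trans (Nat.le_succ n))),
      h (n + 1) le_rfl]

lemma psum_le_psum {a : ℕ → L} (ho : E.Orthogonal a) {n m : ℕ} (h : n ≤ m) :
    E.le (E.psum a n) (E.psum a m) := by
  induction m with
  | zero =>
    have : n = 0 := Nat.le_zero.mp h
    subst this; exact E.le_refl' _
  | succ m ih =>
    rcases Nat.lt_or_ge n (m + 1) with hlt | hge
    · exact E.le_trans' (ih (Nat.lt_succ_iff.mp hlt)) (E.le_add_self (ho m))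
    · have : n = m + 1 := le_antisymm h hge
      subst this; exact E.le_refl' _

lemma measure_zero {G : Type*} [AddCommGroup G] (μ : L → G) (hμ : E.IsMeasure μ) :
    μ E.zero = 0 := by
  have h := hμ E.one E.zero E.one_zero.1
  rw [E.one_zero.2] at h
  exact (left_eq_add.mp h)

lemma measure_psum {G : Type*} [AddCommGroup G] (μ : L → G) (hμ : E.IsMeasure μ)
    {a : ℕ → L} (ho : E.Orthogonal a) (n : ℕ) :
    μ (E.psum a n) = ∑ k ∈ Finset.range (n + 1), μ (a k) := by
  induction n with
  | zero => simp [psum]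
  | succ n ih =>
    rw [E.psum_succ, hμ _ _ (ho n), ih]
    exact (Finset.sum_range_succ _ _).symm

end Aux

section Sel

variable {L : Type*} (E : EffectAlgebra L) (b : ℕ → L)

open Classical in
/-- The selection of the elements of `b` indexed by `S`, padded with zeros. -/
noncomputable def sel (S : Set ℕ) (n : ℕ) : L := if n ∈ S then b n else E.zero

lemma sel_univ : E.sel b Set.univ = b := by
  funext n; simp [sel]

variable {E b} (hb : E.IsNaturalBasis b)
include hb

lemma F_union : ∀ (N : ℕ) (S T : Set ℕ), Disjoint S T →
    E.D (E.psum (E.sel b S) N) (E.psum (E.sel b T) N) ∧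
      E.add (E.psum (E.sel b S) N) (E.psum (E.sel b T) N) = E.psum (E.sel b (S ∪ T)) N := by
  intro N
  induction N with
  | zero =>
    intro S T hd
    by_cases hS : 0 ∈ S
    · have hT : 0 ∉ T := fun hT => Set.disjoint_left.mp hd hS hT
      simp only [psum, sel, if_pos hS, if_neg hT, if_pos (Set.mem_union_left T hS)]
      exact (E.add_zero' (b 0))
    · by_cases hT : 0 ∈ T
      · simp only [psum, sel, if_neg hS, if_pos hT, if_pos (Set.mem_union_right S hT)]
        refine ⟨E.comm_def (E.add_zero' (b 0)).1, ?_⟩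
        rw [E.comm (E.comm_def (E.add_zero' (b 0)).1), (E.add_zero' (b 0)).2]
      · simp only [psum, sel, if_neg hS, if_neg hT,
          if_neg (fun h : 0 ∈ S ∪ T => h.elim hS hT)]
        exact (E.add_zero' E.zero)
  | succ N ih =>
    intro S T hd
    have hle : ∀ U : Set ℕ, E.le (E.psum (E.sel b U) N) (E.psum b N) := by
      intro U
      obtain ⟨hD, hA⟩ := ih U Uᶜ disjoint_compl_right
      refine ⟨E.psum (E.sel b Uᶜ) N, hD, ?_⟩
      rw [hA, Set.union_compl_self, E.sel_univ]
    obtain ⟨ihD, ihA⟩ := ih S T hd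
    set x := E.psum (E.sel b S) N with hx
    set y := E.psum (E.sel b T) N with hy
    have hzb : E.D (E.add x y) (b (N + 1)) := by
      rw [ihA]
      exact E.D_of_le_left (hle (S ∪ T)) (hb.1.1 N)
    by_cases hS : (N + 1) ∈ S
    · have hT : (N + 1) ∉ T := fun hT => Set.disjoint_left.mp hd hS hT
      obtain ⟨hxb, hD, he⟩ := E.swap' ihD hzb
      simp only [psum_succ, sel, if_pos hS, if_neg hT,
        if_pos (Set.mem_union_left T hS), ← hx, ← hy, (E.add_zero' y).2]
      exact ⟨hD, by rw [← he, ihA]⟩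
    · by_cases hT : (N + 1) ∈ T
      · obtain ⟨hyb, hD, he⟩ := E.assoc' ihD hzb
        simp only [psum_succ, sel, if_neg hS, if_pos hT,
          if_pos (Set.mem_union_right S hT), ← hx, ← hy, (E.add_zero' x).2]
        exact ⟨hD, by rw [← he, ihA]⟩
      · simp only [psum_succ, sel, if_neg hS, if_neg hT,
          if_neg (fun h : (N + 1) ∈ S ∪ T => h.elim hS hT), ← hx, ← hy,
          (E.add_zero' x).2, (E.add_zero' y).2, (E.add_zero' (E.psum (E.sel b (S ∪ T)) N)).2]
        exact ⟨ihD, ihA⟩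

lemma F_le (N : ℕ) (S : Set ℕ) : E.le (E.psum (E.sel b S) N) (E.psum b N) := by
  obtain ⟨hD, hA⟩ := F_union hb N S Sᶜ disjoint_compl_right
  refine ⟨E.psum (E.sel b Sᶜ) N, hD, ?_⟩
  rw [hA, Set.union_compl_self, E.sel_univ]

lemma sel_orthogonal (S : Set ℕ) : E.Orthogonal (E.sel b S) := by
  intro N
  by_cases hS : (N + 1) ∈ S
  · have : E.sel b S (N + 1) = b (N + 1) := by simp [sel, hS]
    rw [this]
    exact E.D_of_le_left (F_le hb N S) (hb.1.1 N)
  · have : E.sel b S (N + 1) = E.zero := by simp [sel, hS]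
    rw [this]
    exact (E.add_zero' _).1

omit hb in
lemma F_stab {S : Set ℕ} {N : ℕ} (hS : S ⊆ Set.Iic N) :
    ∀ {M : ℕ}, N ≤ M → E.psum (E.sel b S) M = E.psum (E.sel b S) N := by
  intro M
  induction M with
  | zero => intro h; have : N = 0 := Nat.le_zero.mp h; rw [this]
  | succ M ih =>
    intro h
    rcases Nat.lt_or_ge N (M + 1) with hlt | hge
    · have hmem : (M + 1) ∉ S := fun hm => absurd (hS hm) (by simpa using hlt)
      have : E.sel b S (M + 1) = E.zero := by simp [sel, hmem]
      rw [E.psum_succ, this, (E.add_zero' _).2, ih (Nat.lt_succ_iff.mp hlt)]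
    · have : N = M + 1 := le_antisymm h hge
      rw [this]

omit hb in
lemma F_Iic (N : ℕ) : E.psum (E.sel b (Set.Iic N)) N = E.psum b N := by
  refine E.psum_congr N (fun k hk => ?_)
  simp [sel, hk]

lemma F_mu {G : Type*} [AddCommGroup G] (μ : L → G) (hμ : E.IsMeasure μ)
    (S : Set ℕ) (N : ℕ) :
    μ (E.psum (E.sel b S) N) = ∑ k ∈ Finset.range (N + 1), μ (E.sel b S k) :=
  E.measure_psum μ hμ (sel_orthogonal hb S) N

end Sel

end EffectAlgebra

open EffectAlgebra in
/-- On an effect algebra with the strong Riesz decomposition property and a natural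
basis, every σ-additive measure with values in a finite-dimensional Banach space is
bounded. -/
theorem stmt9 {L : Type*} {X : Type*} [NormedAddCommGroup X] [NormedSpace ℝ X]
    [FiniteDimensional ℝ X] (E : EffectAlgebra L) (hR : E.sRDP)
    (b : ℕ → L) (hb : E.IsNaturalBasis b)
    (μ : L → X) (hμ : E.IsMeasure μ) (hσ : E.SigmaAdditive μ) :
    ∃ M : ℝ, ∀ a : L, ‖μ a‖ ≤ M := by
  classical
  -- Step 1: the series `∑ μ (b n)` is (unconditionally) summable.
  have hsum : Summable (fun n => μ (b n)) := by
    by_contra hns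
    rw [summable_iff_vanishing] at hns
    push_neg at hns
    obtain ⟨e, he, hbad⟩ := hns
    have hpick : ∀ M : ℕ, ∃ t : Finset ℕ, (∀ n ∈ t, M < n) ∧ (∑ n ∈ t, μ (b n)) ∉ e := by
      intro M
      obtain ⟨t, hdisj, hnot⟩ := hbad (Finset.range (M + 1))
      refine ⟨t, fun n hn => ?_, hnot⟩
      by_contra hc
      push_neg at hc
      exact (Finset.disjoint_left.mp hdisj hn) (Finset.mem_range.mpr (Nat.lt_succ_of_le hc))
    choose pick hpick1 hpick2 using hpick
    set m : ℕ → ℕ := fun k => Nat.rec 0 (fun _ mj => max (mj + 1) ((pick mj).sup id + 1)) k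
      with hmdef
    have hmsucc : ∀ k, m (k + 1) = max (m k + 1) ((pick (m k)).sup id + 1) := fun k => rfl
    set T : ℕ → Finset ℕ := fun k => pick (m k) with hTdef
    have hmlt : ∀ k, m k < m (k + 1) := by
      intro k; rw [hmsucc]; omega
    have hTsub : ∀ k, ((T k : Set ℕ)) ⊆ Set.Ioc (m k) (m (k + 1)) := by
      intro k n hn
      have hn' : n ∈ pick (m k) := hn
      refine ⟨hpick1 (m k) n hn', ?_⟩
      have h1 : n ≤ (pick (m k)).sup id := Finset.le_sup (f := id) hn'
      have h2 := hmsucc k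
      omega
    set g : ℕ → L := fun n =>
      if n = 0 then E.psum b (m 0)
      else if (n - 1) % 2 = 0 then
        E.psum (E.sel b (↑(T ((n - 1) / 2)))) (m ((n - 1) / 2 + 1))
      else
        E.psum (E.sel b
          (Set.Ioc (m ((n - 1) / 2)) (m ((n - 1) / 2 + 1)) \ ↑(T ((n - 1) / 2))))
          (m ((n - 1) / 2 + 1)) with hgdef
    have hg0 : g 0 = E.psum b (m 0) := by rw [hgdef]; rfl
    have hg1 : ∀ k, g (2 * k + 1) = E.psum (E.sel b (↑(T k))) (m (k + 1)) := by
      intro k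
      have h1 : ¬(2 * k + 1 = 0) := by omega
      have h2 : (2 * k + 1 - 1) % 2 = 0 := by omega
      have h3 : (2 * k + 1 - 1) / 2 = k := by omega
      simp only [hgdef]
      rw [if_neg h1, if_pos h2, h3]
    have hg2 : ∀ k, g (2 * k + 1 + 1) =
        E.psum (E.sel b (Set.Ioc (m k) (m (k + 1)) \ ↑(T k))) (m (k + 1)) := by
      intro k
      have h1 : ¬(2 * k + 1 + 1 = 0) := by omega
      have h2 : ¬((2 * k + 1 + 1 - 1) % 2 = 0) := by omega
      have h3 : (2 * k + 1 + 1 - 1) / 2 = k := by omega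
      simp only [hgdef]
      rw [if_neg h1, if_neg h2, h3]
    -- main inductive step
    have step : ∀ k, E.psum g (2 * k) = E.psum b (m k) →
        E.D (E.psum g (2 * k)) (g (2 * k + 1)) ∧
        E.D (E.psum g (2 * k + 1)) (g (2 * k + 1 + 1)) ∧
        E.psum g (2 * k + 1 + 1) = E.psum b (m (k + 1)) := by
      intro k hC
      set A : Set ℕ := Set.Iic (m k) with hA
      set Tk : Set ℕ := (↑(T k) : Set ℕ) with hTk
      set R : Set ℕ := Set.Ioc (m k) (m (k + 1)) \ Tk with hRk
      set M : ℕ := m (k + 1) with hM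
      have hdAT : Disjoint A Tk := by
        rw [Set.disjoint_left]
        intro n hn hnT
        have h1 : n ≤ m k := hn
        have h2 : m k < n := (hTsub k hnT).1
        omega
      have hdATR : Disjoint (A ∪ Tk) R := by
        rw [Set.disjoint_left]
        rintro n (hn | hn) ⟨hIoc, hnT⟩
        · have h1 : n ≤ m k := hn
          have h2 : m k < n := hIoc.1
          omega
        · exact hnT hn
      have hunion : A ∪ Tk ∪ R = Set.Iic M := by
        have h1 : Tk ∪ R = Set.Ioc (m k) M := Set.union_diff_cancel (hTsub k)
        rw [Set.union_assoc, h1, hA, Set.Iic_union_Ioc_eq_Iic (le_of_lt (hmlt k))]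
      obtain ⟨hD1, hA1⟩ := F_union hb M A Tk hdAT
      obtain ⟨hD2, hA2⟩ := F_union hb M (A ∪ Tk) R hdATR
      have hFA : E.psum b (m k) = E.psum (E.sel b A) M := by
        rw [F_stab (E := E) (b := b) (S := A) (subset_refl _) (le_of_lt (hmlt k)), F_Iic]
      have e1 : E.psum g (2 * k + 1) = E.psum (E.sel b (A ∪ Tk)) M := by
        rw [E.psum_succ, hC, hg1 k, hFA, hA1]
      refine ⟨?_, ?_, ?_⟩
      · rw [hC, hg1 k, hFA]; exact hD1
      · rw [e1, hg2 k]; exact hD2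
      · rw [E.psum_succ, e1, hg2 k, hA2, hunion, F_Iic]
    have C : ∀ k, E.psum g (2 * k) = E.psum b (m k) := by
      intro k
      induction k with
      | zero => simpa [EffectAlgebra.psum] using hg0
      | succ k ih =>
        have h := (step k ih).2.2
        have h2 : 2 * (k + 1) = 2 * k + 1 + 1 := by omega
        rw [h2, h]
    have horth : E.Orthogonal g := by
      intro j
      rcases Nat.even_or_odd j with ⟨k, hk⟩ | ⟨k, hk⟩
      · have hj : j = 2 * k := by omega
        rw [hj]
        exact (step k (C k)).1
      · have hj : j = 2 * k + 1 := by omega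
        rw [hj]
        exact (step k (C k)).2.1
    have hsup : E.IsSup (Set.range (E.psum g)) E.one := by
      constructor
      · rintro x ⟨n, rfl⟩; exact E.le_one _
      · intro u hu
        refine hb.1.2.2 u ?_
        rintro x ⟨N, rfl⟩
        have hNm : N ≤ m N := by
          have hmono : ∀ k, k ≤ m k := by
            intro k
            induction k with
            | zero => omega
            | succ k ih => have := hmlt k; omega
          exact hmono N
        refine E.le_trans' (E.psum_le_psum hb.1.1 hNm) ?_
        rw [← C N]
        exact hu _ ⟨2 * N, rfl⟩
    have htend := hσ g E.one ⟨horth, hsup⟩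
    have hterm : Tendsto (fun n => μ (g n)) atTop (𝓝 0) := by
      have h1 : Tendsto (fun n => (∑ k ∈ Finset.range (n + 1), μ (g k)) -
          ∑ k ∈ Finset.range n, μ (g k)) atTop (𝓝 (μ E.one - μ E.one)) :=
        Tendsto.sub (htend.comp (tendsto_add_atTop_nat 1)) htend
      simpa [Finset.sum_range_succ] using h1
    have hsub : Tendsto (fun k => μ (g (2 * k + 1))) atTop (𝓝 0) :=
      hterm.comp (tendsto_atTop_atTop.mpr (fun N => ⟨N, fun n hn => by omega⟩))
    have hid : ∀ k, μ (g (2 * k + 1)) = ∑ n ∈ T k, μ (b n) := by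
      intro k
      rw [hg1 k, F_mu hb μ hμ]
      have hcg : ∀ n ∈ Finset.range (m (k + 1) + 1),
          μ (E.sel b (↑(T k)) n) = if n ∈ T k then μ (b n) else 0 := by
        intro n _
        by_cases hn : n ∈ T k
        · simp [EffectAlgebra.sel, hn]
        · simp [EffectAlgebra.sel, hn, E.measure_zero μ hμ]
      rw [Finset.sum_congr rfl hcg, Finset.sum_ite_mem,
        Finset.inter_eq_right.mpr ?_]
      intro n hn
      exact Finset.mem_range.mpr (Nat.lt_succ_of_le (hTsub k hn).2)
    have hev : ∀ᶠ k in atTop, μ (g (2 * k + 1)) ∈ e := hsub.eventually (eventually_mem_set.mpr he)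
    obtain ⟨k, hk⟩ := hev.exists
    rw [hid k] at hk
    exact hpick2 (m k) hk
  -- Step 2: absolute summability and the bound.
  have hnorm : Summable (fun n => ‖μ (b n)‖) := summable_norm_iff.mpr hsum
  refine ⟨∑' n, ‖μ (b n)‖, fun a => ?_⟩
  obtain ⟨c, hcos, hcle⟩ := hR b E.one a hb.1 (E.le_one a)
  have hbound : ∀ n, ‖μ (c n)‖ ≤ ‖μ (b n)‖ := by
    intro n
    by_cases hz : c n = E.zero
    · rw [hz, E.measure_zero μ hμ, norm_zero]; exact norm_nonneg _
    · rw [(hb.2 n).2 (c n) hz (hcle n)]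
  have htc := hσ c a hcos
  refine le_of_tendsto htc.norm (Filter.Eventually.of_forall fun n => ?_)
  calc ‖∑ k ∈ Finset.range n, μ (c k)‖ ≤ ∑ k ∈ Finset.range n, ‖μ (c k)‖ :=
        norm_sum_le _ _
    _ ≤ ∑ k ∈ Finset.range n, ‖μ (b k)‖ := Finset.sum_le_sum (fun k _ => hbound k)
    _ ≤ ∑' n, ‖μ (b n)‖ := Summable.sum_le_tsum _ (fun k _ => norm_nonneg _) hnorm
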